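/- Let α, β, γ, δ be nonzero real numbers such that for every η > 0 there is c₀ > 0 with ⟨Pα + Qγ⟩ ≥ c₀·max(|P|,|Q|)^{−(2+η)} and ⟨Pβ + Qδ⟩ ≥ c₀·max(|P|,|Q|)^{−(2+η)} for all integers P, Q not both zero, where ⟨·⟩ denotes distance to the nearest integer. Let Λ₁ = ℤ², Λ₂ = [[γ, α],[0, 1]]·ℤ² and Λ₃ = [[1, 0],[β, δ]]·ℤ². Then for every η > 0 there is c > 0 such that for every ε > 0, every x ∈ ℝ², every M > c/ε^{5+η}, every σ ∈ [−1, 1] and every y ∈ ℝ²: the set Λ₁ ∪ (x + Λ₂) contains a point within distance ε of the segment {y + t·(σ, 1)ᵀ : t ∈ [0, M]}, and the set Λ₁ ∪ (x + Λ₃) contains a point within distance ε of the segment {y + t·(1, σ)ᵀ : t ∈ [0, M]}. -/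

import Mathlib

open Set

noncomputable section

/-- Distance from a real number to the nearest integer. -/
def intDist (x : ℝ) : ℝ := |x - round x|

lemma intDist_nonneg (x : ℝ) : 0 ≤ intDist x := abs_nonneg _

lemma intDist_le (x : ℝ) (m : ℤ) : intDist x ≤ |x - m| := by
  rcases eq_or_ne m (round x) with h | h
  · simp [intDist, h]
  · have h1 : (1:ℝ) ≤ |(m:ℝ) - round x| := by
      have h2 : (1:ℤ) ≤ |m - round x| := Int.one_le_abs (sub_ne_zero.mpr h)
      calc (1:ℝ) = ((1:ℤ):ℝ) := by norm_num
        _ ≤ ((|m - round x| : ℤ) : ℝ) := by exact_mod_cast h2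
        _ = |(m:ℝ) - round x| := by push_cast; ring_nf
    have h2 : |x - round x| ≤ 1/2 := abs_sub_round x
    have h3 : |(m:ℝ) - round x| ≤ |(m:ℝ) - x| + |x - round x| := abs_sub_le _ _ _
    have h4 : |(m:ℝ) - x| = |x - m| := abs_sub_comm _ _
    have : intDist x = |x - round x| := rfl
    linarith

lemma intDist_round (x : ℝ) : |x - round x| = intDist x := rfl

lemma block_hit (θ a : ℝ) (p q : ℤ) (hq : 0 < q) (hco : IsCoprime p q) :
    ∃ k : ℤ, 0 ≤ k ∧ k < q ∧ intDist (a + k*θ) ≤ 1/(2*q) + |q*θ - p| := by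
  obtain ⟨u, v, huv⟩ := hco
  set r : ℤ := round ((q:ℝ)*a) with hr
  refine ⟨((-r)*u) % q, Int.emod_nonneg _ (ne_of_gt hq), Int.emod_lt_of_pos _ hq, ?_⟩
  set k : ℤ := ((-r)*u) % q with hk
  set s : ℤ := ((-r)*u) / q with hs
  have hdiv : q * s + k = (-r)*u := Int.mul_ediv_add_emod _ _
  set w : ℤ := r*v - s*p with hw
  have hkp : k * p = -r + q * w := by
    have : k = (-r)*u - q*s := by omega
    rw [this, hw]
    linear_combination (-r) * huv
  have hqR : (0:ℝ) < (q:ℝ) := by exact_mod_cast hq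
  have hkey : a + (k:ℝ)*θ - (w:ℝ) = ((q:ℝ)*a - r)/q + (k:ℝ)*((q:ℝ)*θ - p)/q := by
    have hkpR : (k:ℝ) * p = -(r:ℝ) + (q:ℝ) * w := by exact_mod_cast hkp
    field_simp
    linear_combination hkpR
  have h1 : |(q:ℝ)*a - r| ≤ 1/2 := abs_sub_round _
  have hk0R : (0:ℝ) ≤ (k:ℝ) := by exact_mod_cast Int.emod_nonneg _ (ne_of_gt hq)
  have hkqR : (k:ℝ) ≤ (q:ℝ) := by
    have : k ≤ q := le_of_lt (Int.emod_lt_of_pos _ hq)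
    exact_mod_cast this
  have h2 : |a + (k:ℝ)*θ - (w:ℝ)| ≤ (1/2)/q + |(q:ℝ)*θ - p| := by
    rw [hkey]
    calc |((q:ℝ)*a - r)/q + (k:ℝ)*((q:ℝ)*θ - p)/q|
        ≤ |((q:ℝ)*a - r)/q| + |(k:ℝ)*((q:ℝ)*θ - p)/q| := abs_add_le _ _
      _ = |(q:ℝ)*a - r|/q + ((k:ℝ)/q)*|(q:ℝ)*θ - p| := by
          rw [abs_div, abs_div, abs_mul, abs_of_pos hqR, abs_of_nonneg hk0R]; ring
      _ ≤ (1/2)/q + 1*|(q:ℝ)*θ - p| := by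
          have hd : (k:ℝ)/q ≤ 1 := by
            rw [div_le_one hqR]; exact hkqR
          have := abs_nonneg ((q:ℝ)*θ - p)
          have h1q : (0:ℝ) < 1/(q:ℝ) := by positivity
          gcongr
      _ = (1/2)/q + |(q:ℝ)*θ - p| := by ring
  calc intDist (a + (k:ℝ)*θ) ≤ |a + (k:ℝ)*θ - (w:ℝ)| := intDist_le _ _
    _ ≤ (1/2)/q + |(q:ℝ)*θ - p| := h2
    _ = 1/(2*q) + |(q:ℝ)*θ - p| := by rw [div_div]

lemma prog_dichotomy (θ a ρ : ℝ) (N : ℕ) (hρ : 0 < ρ) (hN : 2/ρ ≤ (N:ℝ)) :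
    (∃ k : ℕ, (k:ℝ) ≤ (N:ℝ) ∧ intDist (a + (k:ℝ)*θ) ≤ ρ) ∨
    (∃ p q : ℤ, 0 < q ∧ (q:ℝ) < 1/ρ ∧ |(q:ℝ)*θ - (p:ℝ)| ≤ 1/((N:ℝ)+1)) := by
  have hNpos : 0 < N := by
    by_contra h
    push_neg at h
    interval_cases N
    · simp only [Nat.cast_zero] at hN
      have : 0 < 2/ρ := by positivity
      linarith
  obtain ⟨j, q₀, hq₀pos, hq₀le, hd⟩ := Real.exists_int_int_abs_mul_sub_le θ hNpos
  set g : ℕ := Int.gcd j q₀ with hg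
  have hgpos : 0 < g := Int.gcd_pos_of_ne_zero_right j (ne_of_gt hq₀pos)
  set p : ℤ := j / g with hp
  set q : ℤ := q₀ / g with hq'
  have hgdvd1 : (g:ℤ) ∣ j := Int.gcd_dvd_left j q₀
  have hgdvd2 : (g:ℤ) ∣ q₀ := Int.gcd_dvd_right j q₀
  have hqeq : q₀ = g * q := by rw [hq']; exact (Int.mul_ediv_cancel' hgdvd2).symm
  have hjeq : j = g * p := by rw [hp]; exact (Int.mul_ediv_cancel' hgdvd1).symm
  have hqpos : 0 < q := by
    rcases lt_trichotomy q 0 with h | h | h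
    · nlinarith [hqeq, (by exact_mod_cast hgpos : (0:ℤ) < (g:ℤ))]
    · rw [h, mul_zero] at hqeq; omega
    · exact h
  have hco : IsCoprime p q := by
    rw [Int.isCoprime_iff_gcd_eq_one]
    exact Int.gcd_div_gcd_div_gcd (by exact_mod_cast hgpos)
  have hqle : q ≤ q₀ := by
    nlinarith [(by exact_mod_cast hgpos : (1:ℤ) ≤ (g:ℤ))]
  have hdq : |(q:ℝ)*θ - (p:ℝ)| ≤ 1/((N:ℝ)+1) := by
    have hgR : (1:ℝ) ≤ (g:ℝ) := by exact_mod_cast hgpos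
    have heq : (q₀:ℝ)*θ - (j:ℝ) = (g:ℝ) * ((q:ℝ)*θ - (p:ℝ)) := by
      have h1 : (q₀:ℝ) = (g:ℝ) * (q:ℝ) := by exact_mod_cast hqeq
      have h2 : (j:ℝ) = (g:ℝ) * (p:ℝ) := by exact_mod_cast hjeq
      rw [h1, h2]; ring
    have h3 : |(q:ℝ)*θ - (p:ℝ)| ≤ (g:ℝ) * |(q:ℝ)*θ - (p:ℝ)| := by
      nlinarith [abs_nonneg ((q:ℝ)*θ - (p:ℝ))]
    have h4 : (g:ℝ) * |(q:ℝ)*θ - (p:ℝ)| = |(q₀:ℝ)*θ - (j:ℝ)| := by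
      rw [heq, abs_mul, abs_of_nonneg (by linarith : (0:ℝ) ≤ (g:ℝ))]
    calc |(q:ℝ)*θ - (p:ℝ)| ≤ (g:ℝ) * |(q:ℝ)*θ - (p:ℝ)| := h3
      _ = |(q₀:ℝ)*θ - (j:ℝ)| := h4
      _ ≤ 1/((N:ℝ)+1) := hd
  by_cases hcase : (q:ℝ) < 1/ρ
  · exact Or.inr ⟨p, q, hqpos, hcase, hdq⟩
  · push_neg at hcase
    obtain ⟨k, hk0, hkq, hkd⟩ := block_hit θ a p q hqpos hco
    have hqR : (0:ℝ) < (q:ℝ) := by exact_mod_cast hqpos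
    have hb1 : 1/(2*(q:ℝ)) ≤ ρ/2 := by
      rw [div_le_div_iff₀ (by positivity) (by norm_num)]
      have h1 : 1 ≤ ρ * (q:ℝ) := by
        rw [div_le_iff₀ hρ] at hcase
        nlinarith
      nlinarith
    have hb2 : |(q:ℝ)*θ - (p:ℝ)| ≤ ρ/2 := by
      have : 2/ρ + 1 ≤ (N:ℝ) + 1 := by linarith
      have h5 : 1/((N:ℝ)+1) ≤ 1/(2/ρ) := by
        apply div_le_div_of_nonneg_left (by norm_num) (by positivity)
        linarith
      have h6 : 1/(2/ρ) = ρ/2 := by field_simp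
      linarith [hdq]
    refine Or.inl ⟨k.toNat, ?_, ?_⟩
    · have h7 : (k.toNat : ℝ) = (k:ℝ) := by exact_mod_cast Int.toNat_of_nonneg hk0
      have h8 : (k:ℝ) < (q:ℝ) := by exact_mod_cast hkq
      have h9 : (q:ℝ) ≤ (q₀:ℝ) := by exact_mod_cast hqle
      have h10 : (q₀:ℝ) ≤ (N:ℝ) := by exact_mod_cast hq₀le
      linarith
    · have h7 : (k.toNat : ℝ) = (k:ℝ) := by exact_mod_cast Int.toNat_of_nonneg hk0
      rw [h7]
      calc intDist (a + (k:ℝ)*θ) ≤ 1/(2*(q:ℝ)) + |(q:ℝ)*θ - (p:ℝ)| := hkd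
        _ ≤ ρ/2 + ρ/2 := add_le_add hb1 hb2
        _ = ρ := by ring

set_option maxHeartbeats 1000000 in
lemma core (α γ : ℝ) (hγ : γ ≠ 0) (η₀ c₀ : ℝ) (hη₀ : 0 < η₀) (hc₀ : 0 < c₀)
    (hdio' : ∀ P Q : ℤ, ¬(P = 0 ∧ Q = 0) →
      c₀ * (max |(P : ℝ)| |(Q : ℝ)|) ^ (-(2 + η₀)) ≤ intDist ((P : ℝ) * α + (Q : ℝ) * γ))
    (ε σ : ℝ) (hε : 0 < ε) (hε1 : ε ≤ 1) (hσ : |σ| ≤ 1) (N : ℕ)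
    (hN1 : 2/ε ≤ (N:ℝ)) (hN2 : 2*|γ|/ε ≤ (N:ℝ))
    (hNbig : 2*|γ| < c₀ * (|α|+|γ|+2) ^ (-(2+η₀)) * ε^((2:ℝ)+η₀) * ε^((2:ℝ)+η₀) * ε * ((N:ℝ)+1))
    (a b : ℝ) :
    (∃ k : ℕ, (k:ℝ) ≤ (N:ℝ) ∧ intDist (a + (k:ℝ)*σ) ≤ ε) ∨
    (∃ k : ℕ, (k:ℝ) ≤ (N:ℝ) ∧ intDist (b + (k:ℝ)*((σ - α)/γ)) ≤ ε/|γ|) := by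
  have hγ' : 0 < |γ| := abs_pos.mpr hγ
  rcases prog_dichotomy σ a ε N hε hN1 with h | ⟨p, q, hq, hqlt, hqd⟩
  · exact Or.inl h
  have hεγ : 0 < ε/|γ| := by positivity
  have hN2' : 2/(ε/|γ|) ≤ (N:ℝ) := by
    rw [div_div_eq_mul_div]; exact hN2
  rcases prog_dichotomy ((σ - α)/γ) b (ε/|γ|) N hεγ hN2' with h | ⟨p₂, q₂, hq₂, hq₂lt, hq₂d⟩
  · exact Or.inr h
  exfalso
  set e : ℝ := 2 + η₀ with he
  have hepos : 0 < e := by rw [he]; linarith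
  have hqR : (1:ℝ) ≤ (q:ℝ) := by exact_mod_cast hq
  have hq₂R : (1:ℝ) ≤ (q₂:ℝ) := by exact_mod_cast hq₂
  have hq₂lt' : (q₂:ℝ) < |γ|/ε := by
    have h0 : 1/(ε/|γ|) = |γ|/ε := by field_simp
    rw [h0] at hq₂lt; exact hq₂lt
  have hNN : (0:ℝ) < (N:ℝ) + 1 := by positivity
  have hPQ : ¬(q*q₂ = 0 ∧ q*p₂ = 0) := by
    rintro ⟨h1, -⟩
    exact (mul_ne_zero (ne_of_gt hq) (ne_of_gt hq₂)) h1
  have hlow := hdio' (q*q₂) (q*p₂) hPQ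
  set T : ℝ := (σ - α)/γ with hT
  have hid : (↑(q*q₂):ℝ) * α + (↑(q*p₂):ℝ) * γ - (↑(p*q₂):ℝ) =
      -((q₂:ℝ) * ((p:ℝ) - (q:ℝ)*σ)) - (q:ℝ) * γ * ((q₂:ℝ) * T - (p₂:ℝ)) := by
    rw [hT]; push_cast; field_simp; ring
  have hup : intDist ((↑(q*q₂):ℝ) * α + (↑(q*p₂):ℝ) * γ) ≤ 2 * |γ| / (ε*((N:ℝ)+1)) := by
    have h1 : intDist ((↑(q*q₂):ℝ) * α + (↑(q*p₂):ℝ) * γ) ≤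
        |(↑(q*q₂):ℝ) * α + (↑(q*p₂):ℝ) * γ - (↑(p*q₂):ℝ)| := intDist_le _ _
    rw [hid] at h1
    have h2 : |(-((q₂:ℝ) * ((p:ℝ) - (q:ℝ)*σ)) - (q:ℝ) * γ * ((q₂:ℝ) * T - (p₂:ℝ)))| ≤
        (q₂:ℝ) * |(q:ℝ) * σ - (p:ℝ)| + (q:ℝ) * |γ| * |(q₂:ℝ) * T - (p₂:ℝ)| := by
      have h3 : |(-((q₂:ℝ) * ((p:ℝ) - (q:ℝ)*σ)) - (q:ℝ) * γ * ((q₂:ℝ) * T - (p₂:ℝ)))| ≤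
          |(q₂:ℝ) * ((p:ℝ) - (q:ℝ)*σ)| + |(q:ℝ) * γ * ((q₂:ℝ) * T - (p₂:ℝ))| := by
        calc |(-((q₂:ℝ) * ((p:ℝ) - (q:ℝ)*σ)) - (q:ℝ) * γ * ((q₂:ℝ) * T - (p₂:ℝ)))|
            = |((q₂:ℝ) * ((p:ℝ) - (q:ℝ)*σ)) + ((q:ℝ) * γ * ((q₂:ℝ) * T - (p₂:ℝ)))| := by
              rw [← abs_neg]; ring_nf
          _ ≤ _ := abs_add_le _ _
      have h4 : |(q₂:ℝ) * ((p:ℝ) - (q:ℝ)*σ)| = (q₂:ℝ) * |(q:ℝ) * σ - (p:ℝ)| := by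
        rw [abs_mul, abs_of_nonneg (by linarith : (0:ℝ) ≤ (q₂:ℝ)), abs_sub_comm]
      have h5 : |(q:ℝ) * γ * ((q₂:ℝ) * T - (p₂:ℝ))| = (q:ℝ) * |γ| * |(q₂:ℝ) * T - (p₂:ℝ)| := by
        rw [abs_mul, abs_mul, abs_of_nonneg (by linarith : (0:ℝ) ≤ (q:ℝ))]
      rw [h4, h5] at h3; exact h3
    have h6 : (q₂:ℝ) * |(q:ℝ) * σ - (p:ℝ)| + (q:ℝ) * |γ| * |(q₂:ℝ) * T - (p₂:ℝ)| ≤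
        ((q₂:ℝ) + (q:ℝ) * |γ|) * (1/((N:ℝ)+1)) := by
      have e1 : (q₂:ℝ) * |(q:ℝ) * σ - (p:ℝ)| ≤ (q₂:ℝ) * (1/((N:ℝ)+1)) := by
        apply mul_le_mul_of_nonneg_left hqd (by linarith)
      have e2 : (q:ℝ) * |γ| * |(q₂:ℝ) * T - (p₂:ℝ)| ≤ (q:ℝ) * |γ| * (1/((N:ℝ)+1)) := by
        apply mul_le_mul_of_nonneg_left hq₂d (by positivity)
      nlinarith
    have h7 : ((q₂:ℝ) + (q:ℝ) * |γ|) * (1/((N:ℝ)+1)) ≤ 2 * |γ| / (ε*((N:ℝ)+1)) := by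
      have e3 : (q:ℝ) * |γ| ≤ (1/ε) * |γ| :=
        mul_le_mul_of_nonneg_right (le_of_lt hqlt) (le_of_lt hγ')
      have e4 : (q₂:ℝ) + (q:ℝ) * |γ| ≤ 2 * |γ| / ε := by
        have : 2 * |γ| / ε = |γ|/ε + (1/ε) * |γ| := by ring
        linarith [hq₂lt']
      calc ((q₂:ℝ) + (q:ℝ) * |γ|) * (1/((N:ℝ)+1))
          ≤ (2 * |γ| / ε) * (1/((N:ℝ)+1)) := by
            apply mul_le_mul_of_nonneg_right e4 (by positivity)
        _ = 2 * |γ| / (ε*((N:ℝ)+1)) := by field_simp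
    linarith
  set A : ℝ := |α| + |γ| + 2 with hA
  have hApos : 0 < A := by positivity
  set X : ℝ := max |(↑(q*q₂):ℝ)| |(↑(q*p₂):ℝ)| with hX
  have hXpos : (0:ℝ) < X := by
    have : (1:ℝ) ≤ |(↑(q*q₂):ℝ)| := by
      have h0 : (1:ℤ) ≤ |q*q₂| := Int.one_le_abs (mul_ne_zero (ne_of_gt hq) (ne_of_gt hq₂))
      calc (1:ℝ) = ((1:ℤ):ℝ) := by norm_num
        _ ≤ ((|q*q₂|:ℤ):ℝ) := by exact_mod_cast h0
        _ = |(↑(q*q₂):ℝ)| := by push_cast; ring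
    have := le_max_left |(↑(q*q₂):ℝ)| |(↑(q*p₂):ℝ)|
    rw [hX]; linarith
  have hXle : X ≤ A/(ε*ε) := by
    rw [hX]
    apply max_le
    · have h0 : |(↑(q*q₂):ℝ)| = (q:ℝ)*(q₂:ℝ) := by
        push_cast; rw [abs_of_pos (by nlinarith : (0:ℝ) < (q:ℝ)*(q₂:ℝ))]
      rw [h0]
      calc (q:ℝ)*(q₂:ℝ) ≤ (1/ε)*(|γ|/ε) := by
            apply mul_le_mul (le_of_lt hqlt) (le_of_lt hq₂lt') (by linarith) (by positivity)
        _ = |γ|/(ε*ε) := by ring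
        _ ≤ A/(ε*ε) := by
            apply div_le_div_of_nonneg_right _ (by positivity)
            rw [hA]; linarith [abs_nonneg α]
    · have hp₂b : |(p₂:ℝ)| ≤ (q₂:ℝ) * ((1+|α|)/|γ|) + 1 := by
        have h1 : (p₂:ℝ) = (q₂:ℝ) * T - ((q₂:ℝ) * T - (p₂:ℝ)) := by ring
        have h2 : |(p₂:ℝ)| ≤ |(q₂:ℝ) * T| + |(q₂:ℝ) * T - (p₂:ℝ)| := by
          calc |(p₂:ℝ)| = |(q₂:ℝ) * T - ((q₂:ℝ) * T - (p₂:ℝ))| := by rw [← h1]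
            _ ≤ |(q₂:ℝ) * T| + |(q₂:ℝ) * T - (p₂:ℝ)| := abs_sub ((q₂:ℝ) * T) ((q₂:ℝ) * T - (p₂:ℝ))
        have h3 : |(q₂:ℝ) * T| ≤ (q₂:ℝ) * ((1+|α|)/|γ|) := by
          rw [abs_mul, abs_of_nonneg (by linarith : (0:ℝ) ≤ (q₂:ℝ))]
          apply mul_le_mul_of_nonneg_left _ (by linarith)
          rw [hT, abs_div]
          gcongr
          calc |σ - α| ≤ |σ| + |α| := abs_sub σ α
            _ ≤ 1 + |α| := by linarith
        have h4 : |(q₂:ℝ) * T - (p₂:ℝ)| ≤ 1 := by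
          have h5 : 1/((N:ℝ)+1) ≤ 1 := by
            rw [div_le_one hNN]
            have := Nat.cast_nonneg (α := ℝ) N
            linarith
          linarith [hq₂d]
        linarith
      have h0 : |(↑(q*p₂):ℝ)| = (q:ℝ) * |(p₂:ℝ)| := by
        push_cast
        rw [abs_mul, abs_of_pos (by linarith : (0:ℝ) < (q:ℝ))]
      rw [h0]
      have h6 : (q:ℝ) * |(p₂:ℝ)| ≤ (1/ε) * ((|γ|/ε) * ((1+|α|)/|γ|) + 1) := by
        apply mul_le_mul (le_of_lt hqlt) _ (abs_nonneg _) (by positivity)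
        have := mul_le_mul_of_nonneg_right (le_of_lt hq₂lt')
          (by positivity : (0:ℝ) ≤ (1+|α|)/|γ|)
        linarith [hp₂b]
      have h7 : (1/ε) * ((|γ|/ε) * ((1+|α|)/|γ|) + 1) = (1+|α|)/(ε*ε) + 1/ε := by
        field_simp
      have h8 : 1/ε ≤ 1/(ε*ε) := by
        apply div_le_div_of_nonneg_left (by norm_num) (by positivity)
        nlinarith
      have h9 : (1+|α|)/(ε*ε) + 1/(ε*ε) ≤ A/(ε*ε) := by
        rw [← add_div]
        apply div_le_div_of_nonneg_right _ (by positivity)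
        rw [hA]; linarith [abs_nonneg γ]
      linarith
  -- rpow computation
  have hr1 : X ^ e ≤ (A/(ε*ε)) ^ e :=
    Real.rpow_le_rpow (le_of_lt hXpos) hXle (le_of_lt hepos)
  have hr2 : (A/(ε*ε)) ^ (-e) ≤ X ^ (-e) := by
    rw [Real.rpow_neg (le_of_lt hXpos), Real.rpow_neg (by positivity : (0:ℝ) ≤ A/(ε*ε))]
    exact inv_anti₀ (Real.rpow_pos_of_pos hXpos e) hr1
  have hr3 : (A/(ε*ε)) ^ (-e) = A ^ (-e) * (ε^e * ε^e) := by
    rw [Real.rpow_neg (by positivity : (0:ℝ) ≤ A/(ε*ε)),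
      Real.div_rpow (le_of_lt hApos) (by positivity : (0:ℝ) ≤ ε*ε),
      inv_div, Real.mul_rpow (le_of_lt hε) (le_of_lt hε),
      Real.rpow_neg (le_of_lt hApos)]
    field_simp
  have hchain : c₀ * A ^ (-e) * (ε^e * ε^e) ≤ 2 * |γ| / (ε*((N:ℝ)+1)) := by
    calc c₀ * A ^ (-e) * (ε^e * ε^e) = c₀ * ((A/(ε*ε)) ^ (-e)) := by rw [hr3]; ring
      _ ≤ c₀ * (X ^ (-e)) := by
          apply mul_le_mul_of_nonneg_left hr2 (le_of_lt hc₀)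
      _ ≤ intDist ((↑(q*q₂):ℝ) * α + (↑(q*p₂):ℝ) * γ) := hlow
      _ ≤ 2 * |γ| / (ε*((N:ℝ)+1)) := hup
  have hfin : c₀ * A ^ (-e) * (ε^e * ε^e) * (ε*((N:ℝ)+1)) ≤ 2 * |γ| := by
    rw [← le_div_iff₀ (by positivity : (0:ℝ) < ε*((N:ℝ)+1))]
    exact hchain
  have : c₀ * A ^ (-e) * ε^e * ε^e * ε * ((N:ℝ)+1) ≤ 2 * |γ| := by
    calc c₀ * A ^ (-e) * ε^e * ε^e * ε * ((N:ℝ)+1)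
        = c₀ * A ^ (-e) * (ε^e * ε^e) * (ε*((N:ℝ)+1)) := by ring
      _ ≤ 2 * |γ| := hfin
  rw [hA] at this
  linarith [hNbig]

set_option maxHeartbeats 1000000 in
lemma vert_case (α γ : ℝ) (hγ : γ ≠ 0) (η₀ c₀ : ℝ) (hη₀ : 0 < η₀) (hc₀ : 0 < c₀)
    (hdio' : ∀ P Q : ℤ, ¬(P = 0 ∧ Q = 0) →
      c₀ * (max |(P : ℝ)| |(Q : ℝ)|) ^ (-(2 + η₀)) ≤ intDist ((P : ℝ) * α + (Q : ℝ) * γ))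
    (ε σ : ℝ) (hε : 0 < ε) (hε1 : ε ≤ 1) (hσ : |σ| ≤ 1)
    (M : ℝ) (x y : ℝ × ℝ) (N : ℕ)
    (hNM : (N:ℝ) + 1 ≤ M) (hN1 : 2/ε ≤ (N:ℝ)) (hN2 : 2*|γ|/ε ≤ (N:ℝ))
    (hNbig : 2*|γ| < c₀ * (|α|+|γ|+2) ^ (-(2+η₀)) * ε^((2:ℝ)+η₀) * ε^((2:ℝ)+η₀) * ε * ((N:ℝ)+1)) :
    ∃ t ∈ Set.Icc (0 : ℝ) M,
      ∃ z ∈ ({v : ℝ × ℝ | ∃ m n : ℤ, v = ((m : ℝ), (n : ℝ))} ∪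
        (fun v => x + v) ''
          {v : ℝ × ℝ | ∃ m n : ℤ, v = (γ * (m : ℝ) + α * (n : ℝ), (n : ℝ))}),
        dist (y + t • ((σ, 1) : ℝ × ℝ)) z ≤ ε := by
  set a : ℝ := y.1 + ((⌈y.2⌉ : ℝ) - y.2) * σ with ha
  set b : ℝ := (y.1 - x.1 + (x.2 - y.2) * σ + ((⌈y.2 - x.2⌉ : ℝ)) * (σ - α)) / γ with hb
  rcases core α γ hγ η₀ c₀ hη₀ hc₀ hdio' ε σ hε hε1 hσ N hN1 hN2 hNbig a b with
    ⟨k, hk, hit⟩ | ⟨k, hk, hit⟩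
  · -- integer lattice hit
    set t : ℝ := (⌈y.2⌉ : ℝ) - y.2 + k with ht
    have ht0 : 0 ≤ t := by
      have := Int.le_ceil y.2
      have hk0 : (0:ℝ) ≤ (k:ℝ) := Nat.cast_nonneg k
      rw [ht]; linarith
    have htM : t ≤ M := by
      have := Int.ceil_lt_add_one y.2
      rw [ht]; linarith
    refine ⟨t, ⟨ht0, htM⟩, (((round (a + (k:ℝ)*σ) : ℤ) : ℝ), ((⌈y.2⌉ + (k:ℤ) : ℤ) : ℝ)), ?_, ?_⟩
    · left
      exact ⟨round (a + (k:ℝ)*σ), ⌈y.2⌉ + (k:ℤ), rfl⟩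
    · have hpt : y + t • ((σ, 1) : ℝ × ℝ) = (y.1 + t*σ, y.2 + t) := by
        have : t • ((σ, 1) : ℝ × ℝ) = (t*σ, t) := by
          simp [Prod.smul_def, smul_eq_mul]
        rw [this]
        rfl
      rw [hpt, Prod.dist_eq]
      have hcoord1 : y.1 + t*σ = a + (k:ℝ)*σ := by rw [ht, ha]; ring
      have hcoord2 : y.2 + t = ((⌈y.2⌉ + (k:ℤ) : ℤ) : ℝ) := by
        push_cast
        rw [ht]; ring
      apply max_le
      · rw [Real.dist_eq, hcoord1]
        exact hit
      · rw [Real.dist_eq, hcoord2, sub_self, abs_zero]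
        linarith
  · -- translated lattice hit
    set T : ℝ := (σ - α)/γ with hT
    set n : ℤ := ⌈y.2 - x.2⌉ + (k:ℤ) with hn
    set m : ℤ := round (b + (k:ℝ)*T) with hm
    set t : ℝ := (⌈y.2 - x.2⌉ : ℝ) - (y.2 - x.2) + k with ht
    have ht0 : 0 ≤ t := by
      have := Int.le_ceil (y.2 - x.2)
      have hk0 : (0:ℝ) ≤ (k:ℝ) := Nat.cast_nonneg k
      rw [ht]; linarith
    have htM : t ≤ M := by
      have := Int.ceil_lt_add_one (y.2 - x.2)
      rw [ht]; linarith
    refine ⟨t, ⟨ht0, htM⟩, x + (γ * (m:ℝ) + α * (n:ℝ), (n:ℝ)), ?_, ?_⟩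
    · right
      exact ⟨(γ * (m:ℝ) + α * (n:ℝ), (n:ℝ)), ⟨m, n, rfl⟩, rfl⟩
    · have hpt : y + t • ((σ, 1) : ℝ × ℝ) = (y.1 + t*σ, y.2 + t) := by
        have : t • ((σ, 1) : ℝ × ℝ) = (t*σ, t) := by
          simp [Prod.smul_def, smul_eq_mul]
        rw [this]
        rfl
      have hz : x + (γ * (m:ℝ) + α * (n:ℝ), (n:ℝ)) = (x.1 + (γ * (m:ℝ) + α * (n:ℝ)), x.2 + (n:ℝ)) := rfl
      rw [hpt, hz, Prod.dist_eq]
      have hγ' : 0 < |γ| := abs_pos.mpr hγ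
      have hcoord2 : y.2 + t = x.2 + (n:ℝ) := by
        rw [ht, hn]; push_cast; ring
      have hcoord1 : y.1 + t*σ - (x.1 + (γ * (m:ℝ) + α * (n:ℝ))) = γ * (b + (k:ℝ)*T - (m:ℝ)) := by
        rw [ht, hb, hT, hn]
        push_cast
        field_simp
        ring
      apply max_le
      · rw [Real.dist_eq, hcoord1, abs_mul]
        have h1 : |b + (k:ℝ)*T - (m:ℝ)| = intDist (b + (k:ℝ)*T) := by
          rw [hm]; rfl
        rw [h1]
        calc |γ| * intDist (b + (k:ℝ)*T) ≤ |γ| * (ε/|γ|) := by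
              apply mul_le_mul_of_nonneg_left hit (le_of_lt hγ')
          _ = ε := by field_simp
      · rw [Real.dist_eq, hcoord2, sub_self, abs_zero]
        linarith

set_option maxHeartbeats 1000000 in
lemma horiz_case (β δ : ℝ) (hδ : δ ≠ 0) (η₀ c₀ : ℝ) (hη₀ : 0 < η₀) (hc₀ : 0 < c₀)
    (hdio' : ∀ P Q : ℤ, ¬(P = 0 ∧ Q = 0) →
      c₀ * (max |(P : ℝ)| |(Q : ℝ)|) ^ (-(2 + η₀)) ≤ intDist ((P : ℝ) * β + (Q : ℝ) * δ))
    (ε σ : ℝ) (hε : 0 < ε) (hε1 : ε ≤ 1) (hσ : |σ| ≤ 1)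
    (M : ℝ) (x y : ℝ × ℝ) (N : ℕ)
    (hNM : (N:ℝ) + 1 ≤ M) (hN1 : 2/ε ≤ (N:ℝ)) (hN2 : 2*|δ|/ε ≤ (N:ℝ))
    (hNbig : 2*|δ| < c₀ * (|β|+|δ|+2) ^ (-(2+η₀)) * ε^((2:ℝ)+η₀) * ε^((2:ℝ)+η₀) * ε * ((N:ℝ)+1)) :
    ∃ t ∈ Set.Icc (0 : ℝ) M,
      ∃ z ∈ ({v : ℝ × ℝ | ∃ m n : ℤ, v = ((m : ℝ), (n : ℝ))} ∪
        (fun v => x + v) ''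
          {v : ℝ × ℝ | ∃ m n : ℤ, v = ((m : ℝ), β * (m : ℝ) + δ * (n : ℝ))}),
        dist (y + t • ((1, σ) : ℝ × ℝ)) z ≤ ε := by
  set a : ℝ := y.2 + ((⌈y.1⌉ : ℝ) - y.1) * σ with ha
  set b : ℝ := (y.2 - x.2 + (x.1 - y.1) * σ + ((⌈y.1 - x.1⌉ : ℝ)) * (σ - β)) / δ with hb
  rcases core β δ hδ η₀ c₀ hη₀ hc₀ hdio' ε σ hε hε1 hσ N hN1 hN2 hNbig a b with
    ⟨k, hk, hit⟩ | ⟨k, hk, hit⟩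
  · set t : ℝ := (⌈y.1⌉ : ℝ) - y.1 + k with ht
    have ht0 : 0 ≤ t := by
      have := Int.le_ceil y.1
      have hk0 : (0:ℝ) ≤ (k:ℝ) := Nat.cast_nonneg k
      rw [ht]; linarith
    have htM : t ≤ M := by
      have := Int.ceil_lt_add_one y.1
      rw [ht]; linarith
    refine ⟨t, ⟨ht0, htM⟩, (((⌈y.1⌉ + (k:ℤ) : ℤ) : ℝ), ((round (a + (k:ℝ)*σ) : ℤ) : ℝ)), ?_, ?_⟩
    · left
      exact ⟨⌈y.1⌉ + (k:ℤ), round (a + (k:ℝ)*σ), rfl⟩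
    · have hpt : y + t • ((1, σ) : ℝ × ℝ) = (y.1 + t, y.2 + t*σ) := by
        have : t • ((1, σ) : ℝ × ℝ) = (t, t*σ) := by
          simp [Prod.smul_def, smul_eq_mul]
        rw [this]
        rfl
      rw [hpt, Prod.dist_eq]
      have hcoord2 : y.2 + t*σ = a + (k:ℝ)*σ := by rw [ht, ha]; ring
      have hcoord1 : y.1 + t = ((⌈y.1⌉ + (k:ℤ) : ℤ) : ℝ) := by
        push_cast
        rw [ht]; ring
      apply max_le
      · rw [Real.dist_eq, hcoord1, sub_self, abs_zero]
        linarith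
      · rw [Real.dist_eq, hcoord2]
        exact hit
  · set T : ℝ := (σ - β)/δ with hT
    set m : ℤ := ⌈y.1 - x.1⌉ + (k:ℤ) with hm
    set n : ℤ := round (b + (k:ℝ)*T) with hn
    set t : ℝ := (⌈y.1 - x.1⌉ : ℝ) - (y.1 - x.1) + k with ht
    have ht0 : 0 ≤ t := by
      have := Int.le_ceil (y.1 - x.1)
      have hk0 : (0:ℝ) ≤ (k:ℝ) := Nat.cast_nonneg k
      rw [ht]; linarith
    have htM : t ≤ M := by
      have := Int.ceil_lt_add_one (y.1 - x.1)
      rw [ht]; linarith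
    refine ⟨t, ⟨ht0, htM⟩, x + ((m:ℝ), β * (m:ℝ) + δ * (n:ℝ)), ?_, ?_⟩
    · right
      exact ⟨((m:ℝ), β * (m:ℝ) + δ * (n:ℝ)), ⟨m, n, rfl⟩, rfl⟩
    · have hpt : y + t • ((1, σ) : ℝ × ℝ) = (y.1 + t, y.2 + t*σ) := by
        have : t • ((1, σ) : ℝ × ℝ) = (t, t*σ) := by
          simp [Prod.smul_def, smul_eq_mul]
        rw [this]
        rfl
      have hz : x + ((m:ℝ), β * (m:ℝ) + δ * (n:ℝ)) = (x.1 + (m:ℝ), x.2 + (β * (m:ℝ) + δ * (n:ℝ))) := rfl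
      rw [hpt, hz, Prod.dist_eq]
      have hδ' : 0 < |δ| := abs_pos.mpr hδ
      have hcoord1 : y.1 + t = x.1 + (m:ℝ) := by
        rw [ht, hm]; push_cast; ring
      have hcoord2 : y.2 + t*σ - (x.2 + (β * (m:ℝ) + δ * (n:ℝ))) = δ * (b + (k:ℝ)*T - (n:ℝ)) := by
        rw [ht, hb, hT, hm]
        push_cast
        field_simp
        ring
      apply max_le
      · rw [Real.dist_eq, hcoord1, sub_self, abs_zero]
        linarith
      · rw [Real.dist_eq, hcoord2, abs_mul]
        have h1 : |b + (k:ℝ)*T - (n:ℝ)| = intDist (b + (k:ℝ)*T) := by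
          rw [hn]; rfl
        rw [h1]
        calc |δ| * intDist (b + (k:ℝ)*T) ≤ |δ| * (ε/|δ|) := by
              apply mul_le_mul_of_nonneg_left hit (le_of_lt hδ')
          _ = ε := by field_simp

lemma trivial_hit (ε M : ℝ) (hε : 1/2 < ε) (hM : 0 < M) (y : ℝ × ℝ)
    (v : ℝ × ℝ) (S : Set (ℝ × ℝ)) (hS : ∀ m n : ℤ, (((m:ℤ):ℝ), ((n:ℤ):ℝ)) ∈ S) :
    ∃ t ∈ Set.Icc (0:ℝ) M, ∃ z ∈ S, dist (y + t • v) z ≤ ε := by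
  refine ⟨0, ⟨le_refl 0, le_of_lt hM⟩,
    (((round y.1 : ℤ) : ℝ), ((round y.2 : ℤ) : ℝ)), hS _ _, ?_⟩
  have h0 : y + (0:ℝ) • v = y := by simp
  rw [h0, Prod.dist_eq]
  apply max_le
  · rw [Real.dist_eq]
    have := abs_sub_round y.1
    linarith
  · rw [Real.dist_eq]
    have := abs_sub_round y.2
    linarith


set_option maxHeartbeats 1000000 in
/-- **Visibility for two of the three lattices.** Let `α, β, γ, δ` be nonzero reals
such that for every `η > 0` there is `c₀ > 0` with
`⟨Pα + Qγ⟩ ≥ c₀ max(|P|,|Q|)^{-(2+η)}` and `⟨Pβ + Qδ⟩ ≥ c₀ max(|P|,|Q|)^{-(2+η)}`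
for all integers `P, Q` not both zero. With `Λ₁ = ℤ²`, `Λ₂ = [[γ, α],[0, 1]]·ℤ²`,
`Λ₃ = [[1, 0],[β, δ]]·ℤ²`: for every `η > 0` there is `c > 0` such that for every
`ε > 0`, every `x ∈ ℝ²`, every `M > c/ε^{5+η}` and every slope `σ ∈ [-1, 1]`,
the set `Λ₁ ∪ (x + Λ₂)` comes within `ε` of every nearly vertical segment
`{y + t(σ,1) : t ∈ [0,M]}`, and `Λ₁ ∪ (x + Λ₃)` comes within `ε` of every nearly
horizontal segment `{y + t(1,σ) : t ∈ [0,M]}`. -/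
theorem visibility_for_lattice_pairs
    (α β γ δ : ℝ) (hα : α ≠ 0) (hβ : β ≠ 0) (hγ : γ ≠ 0) (hδ : δ ≠ 0)
    (hdio : ∀ η : ℝ, 0 < η → ∃ c₀ > (0 : ℝ), ∀ P Q : ℤ, ¬(P = 0 ∧ Q = 0) →
      c₀ * (max |(P : ℝ)| |(Q : ℝ)|) ^ (-(2 + η)) ≤ intDist ((P : ℝ) * α + (Q : ℝ) * γ) ∧
      c₀ * (max |(P : ℝ)| |(Q : ℝ)|) ^ (-(2 + η)) ≤ intDist ((P : ℝ) * β + (Q : ℝ) * δ)) :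
    ∀ η : ℝ, 0 < η → ∃ c > (0 : ℝ), ∀ ε : ℝ, 0 < ε → ∀ x : ℝ × ℝ, ∀ M : ℝ,
      M > c / ε ^ (5 + η) → ∀ σ ∈ Set.Icc (-1 : ℝ) 1, ∀ y : ℝ × ℝ,
      (∃ t ∈ Set.Icc (0 : ℝ) M,
        ∃ z ∈ ({v : ℝ × ℝ | ∃ m n : ℤ, v = ((m : ℝ), (n : ℝ))} ∪
          (fun v => x + v) ''
            {v : ℝ × ℝ | ∃ m n : ℤ, v = (γ * (m : ℝ) + α * (n : ℝ), (n : ℝ))}),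
          dist (y + t • ((σ, 1) : ℝ × ℝ)) z ≤ ε) ∧
      (∃ t ∈ Set.Icc (0 : ℝ) M,
        ∃ z ∈ ({v : ℝ × ℝ | ∃ m n : ℤ, v = ((m : ℝ), (n : ℝ))} ∪
          (fun v => x + v) ''
            {v : ℝ × ℝ | ∃ m n : ℤ, v = ((m : ℝ), β * (m : ℝ) + δ * (n : ℝ))}),
          dist (y + t • ((1, σ) : ℝ × ℝ)) z ≤ ε) := by
  intro η hη
  obtain ⟨c₀, hc₀, hd2⟩ := hdio (η/2) (by linarith)
  have hη₀ : 0 < η/2 := by linarith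
  obtain ⟨cA, hcApos, hcA⟩ :
      ∃ cA : ℝ, 0 < cA ∧ cA = c₀ * (|α| + |γ| + 2) ^ (-(2+η/2)) :=
    ⟨_, mul_pos hc₀ (Real.rpow_pos_of_pos (by positivity) _), rfl⟩
  obtain ⟨cB, hcBpos, hcB⟩ :
      ∃ cB : ℝ, 0 < cB ∧ cB = c₀ * (|β| + |δ| + 2) ^ (-(2+η/2)) :=
    ⟨_, mul_pos hc₀ (Real.rpow_pos_of_pos (by positivity) _), rfl⟩
  have habsγ : (0:ℝ) ≤ |γ| := abs_nonneg γ
  have habsδ : (0:ℝ) ≤ |δ| := abs_nonneg δ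
  obtain ⟨c, hcpos, hc⟩ :
      ∃ c : ℝ, 0 < c ∧ c = 4 + 2*|γ| + 2*|δ| + 2*|γ|/cA + 2*|δ|/cB + 1 :=
    ⟨_, by positivity, rfl⟩
  have hdivγ : (0:ℝ) ≤ 2*|γ|/cA := by positivity
  have hdivδ : (0:ℝ) ≤ 2*|δ|/cB := by positivity
  refine ⟨c, hcpos, ?_⟩
  intro ε hε x M hM σ hσ y
  have hσ' : |σ| ≤ 1 := abs_le.mpr ⟨hσ.1, hσ.2⟩
  have hppos : (0:ℝ) < ε ^ ((5:ℝ)+η) := Real.rpow_pos_of_pos hε _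
  have hMpos : 0 < M := lt_trans (by positivity) hM
  rcases le_or_gt ε (1/2) with hεle | hεgt
  · -- main case: ε ≤ 1/2
    have hε1 : ε ≤ 1 := by linarith
    have hp2 : ε ^ ((5:ℝ)+η) ≤ ε := by
      have h := Real.rpow_le_rpow_of_exponent_ge hε hε1 (by linarith : (1:ℝ) ≤ 5+η)
      rwa [Real.rpow_one] at h
    have hp3 : ε ^ ((5:ℝ)+η) ≤ 1 := Real.rpow_le_one (le_of_lt hε) hε1 (by linarith)
    have hsplit : ε ^ ((5:ℝ)+η) = ε^((2:ℝ)+η/2) * ε^((2:ℝ)+η/2) * ε := by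
      rw [show (5:ℝ)+η = ((2:ℝ)+η/2) + ((2:ℝ)+η/2) + 1 by ring,
        Real.rpow_add hε (((2:ℝ)+η/2) + ((2:ℝ)+η/2)) 1,
        Real.rpow_add hε ((2:ℝ)+η/2) ((2:ℝ)+η/2), Real.rpow_one]
    have hMc : c / ε ^ ((5:ℝ)+η) < M := hM
    have hcle : c ≤ c / ε ^ ((5:ℝ)+η) := by
      rw [le_div_iff₀ hppos]
      nlinarith
    have hcεle : c / ε ≤ c / ε ^ ((5:ℝ)+η) :=
      div_le_div_of_nonneg_left (le_of_lt hcpos) hppos hp2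
    have hc4 : 4 ≤ c := by rw [hc]; linarith
    have hMge4 : 4 ≤ M := by linarith
    obtain ⟨N, hNle, hNgt⟩ : ∃ N : ℕ, (N:ℝ) ≤ M - 1 ∧ M - 2 < (N:ℝ) := by
      have hfl0 : (0:ℤ) ≤ ⌊M - 1⌋ := Int.floor_nonneg.mpr (by linarith : (0:ℝ) ≤ M - 1)
      have hNcast : (((⌊M - 1⌋).toNat : ℕ) : ℝ) = ((⌊M - 1⌋ : ℤ) : ℝ) := by
        exact_mod_cast Int.toNat_of_nonneg hfl0
      refine ⟨(⌊M - 1⌋).toNat, ?_, ?_⟩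
      · rw [hNcast]; exact Int.floor_le _
      · rw [hNcast]; linarith [Int.sub_one_lt_floor (M - 1)]
    have hNM : (N:ℝ) + 1 ≤ M := by linarith
    have h2ε : (2:ℝ) ≤ 2/ε := by
      rw [le_div_iff₀ hε]; nlinarith
    have hMcεN : c/ε - 2 < (N:ℝ) := by linarith
    have hgb : 2*|γ| ≤ c - 2 := by rw [hc]; linarith
    have hdb : 2*|δ| ≤ c - 2 := by rw [hc]; linarith
    have hN1 : 2/ε ≤ (N:ℝ) := by
      have e1 : (2:ℝ)/ε ≤ (c-2)/ε := by gcongr; linarith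
      have e2 : (c-2)/ε ≤ c/ε - 2 := by rw [sub_div]; linarith
      linarith
    have hN2γ : 2*|γ|/ε ≤ (N:ℝ) := by
      have e1 : (2*|γ|)/ε ≤ (c-2)/ε := by gcongr
      have e2 : (c-2)/ε ≤ c/ε - 2 := by rw [sub_div]; linarith
      linarith
    have hN2δ : 2*|δ|/ε ≤ (N:ℝ) := by
      have e1 : (2*|δ|)/ε ≤ (c-2)/ε := by gcongr
      have e2 : (c-2)/ε ≤ c/ε - 2 := by rw [sub_div]; linarith
      linarith
    have hone : (1:ℝ) ≤ 1/(ε ^ ((5:ℝ)+η)) := by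
      rw [le_div_iff₀ hppos]; nlinarith
    have hNp1 : (c-1)/(ε ^ ((5:ℝ)+η)) < (N:ℝ) + 1 := by
      have e3 : (c-1)/(ε ^ ((5:ℝ)+η)) ≤ c/(ε ^ ((5:ℝ)+η)) - 1 := by
        rw [sub_div]; linarith
      linarith
    have hk3 : c - 1 < ((N:ℝ)+1) * ε ^ ((5:ℝ)+η) := by
      rw [div_lt_iff₀ hppos] at hNp1
      exact hNp1
    have hbigγ : 2*|γ| <
        c₀ * (|α|+|γ|+2) ^ (-(2+η/2)) * ε^((2:ℝ)+η/2) * ε^((2:ℝ)+η/2) * ε * ((N:ℝ)+1) := by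
      have hformγ : c₀ * (|α|+|γ|+2) ^ (-(2+η/2)) * ε^((2:ℝ)+η/2) * ε^((2:ℝ)+η/2) * ε * ((N:ℝ)+1)
          = cA * (ε ^ ((5:ℝ)+η)) * ((N:ℝ)+1) := by
        rw [hsplit, hcA]; ring
      rw [hformγ]
      have k1 : 2*|γ| ≤ (c-1) * cA := by
        have k0 : 2*|γ|/cA ≤ c - 1 := by rw [hc]; linarith
        rw [div_le_iff₀ hcApos] at k0
        nlinarith
      have k4 : (c-1)*cA < ((N:ℝ)+1) * ε ^ ((5:ℝ)+η) * cA :=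
        mul_lt_mul_of_pos_right hk3 hcApos
      nlinarith
    have hbigδ : 2*|δ| <
        c₀ * (|β|+|δ|+2) ^ (-(2+η/2)) * ε^((2:ℝ)+η/2) * ε^((2:ℝ)+η/2) * ε * ((N:ℝ)+1) := by
      have hformδ : c₀ * (|β|+|δ|+2) ^ (-(2+η/2)) * ε^((2:ℝ)+η/2) * ε^((2:ℝ)+η/2) * ε * ((N:ℝ)+1)
          = cB * (ε ^ ((5:ℝ)+η)) * ((N:ℝ)+1) := by
        rw [hsplit, hcB]; ring
      rw [hformδ]
      have k1 : 2*|δ| ≤ (c-1) * cB := by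
        have k0 : 2*|δ|/cB ≤ c - 1 := by rw [hc]; linarith
        rw [div_le_iff₀ hcBpos] at k0
        nlinarith
      have k4 : (c-1)*cB < ((N:ℝ)+1) * ε ^ ((5:ℝ)+η) * cB :=
        mul_lt_mul_of_pos_right hk3 hcBpos
      nlinarith
    constructor
    · exact vert_case α γ hγ (η/2) c₀ hη₀ hc₀ (fun P Q h => (hd2 P Q h).1) ε σ hε hε1 hσ'
        M x y N hNM hN1 hN2γ hbigγ
    · exact horiz_case β δ hδ (η/2) c₀ hη₀ hc₀ (fun P Q h => (hd2 P Q h).2) ε σ hε hε1 hσ'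
        M x y N hNM hN1 hN2δ hbigδ
  · -- trivial case: ε > 1/2
    constructor
    · exact trivial_hit ε M hεgt hMpos y _ _ (fun m n => Or.inl ⟨m, n, rfl⟩)
    · exact trivial_hit ε M hεgt hMpos y _ _ (fun m n => Or.inl ⟨m, n, rfl⟩)

end
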